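/- (Gronwall inequality on the plane) Let M ≥ 0 and let f, g : [0,1]² → ℝ be continuous with f(s,t) ≤ g(s,t) + M ∫₀^s ∫₀^t f(ξ,ζ) dζ dξ for all (s,t) ∈ [0,1]², where f is nonnegative. Then f(s,t) ≤ g(s,t) + M ∫₀^s ∫₀^t g(ξ,ζ) · I₀(2√(M(s-ξ)(t-ζ))) dζ dξ for all (s,t), where I₀ is the modified Bessel function of order zero. In particular, if g is constant equal to K ≥ 0, then sup_{(s,t)∈[0,1]²} f(s,t) ≤ K(1 + M·I₀(2√M)). -/

import Mathlib

open MeasureTheory intervalIntegral Set Filter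

noncomputable def besselI0 (z : ℝ) : ℝ :=
  ∑' k : ℕ, (z / 2) ^ (2 * k) / ((k.factorial : ℝ)) ^ 2

namespace GP

noncomputable def E (x : ℝ) : ℝ := ∑' k : ℕ, x ^ k / ((k.factorial : ℝ)) ^ 2

noncomputable def P (n : ℕ) (x : ℝ) : ℝ :=
  ∑ k ∈ Finset.range n, x ^ k / ((k.factorial : ℝ)) ^ 2

lemma term_le (x : ℝ) (k : ℕ) : ‖x ^ k / ((k.factorial : ℝ)) ^ 2‖ ≤ |x| ^ k / (k.factorial : ℝ) := by
  have h1 : (1 : ℝ) ≤ (k.factorial : ℝ) := by exact_mod_cast Nat.one_le_iff_ne_zero.2 k.factorial_ne_zero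
  rw [norm_div, norm_pow, Real.norm_eq_abs, Real.norm_eq_abs]
  rw [abs_of_nonneg (by positivity : (0:ℝ) ≤ (k.factorial : ℝ) ^ 2)]
  apply div_le_div_of_nonneg_left ?_ (by positivity) ?_ |>.trans_eq rfl
  · positivity
  · nlinarith

lemma summable_E (x : ℝ) : Summable (fun k : ℕ => x ^ k / ((k.factorial : ℝ)) ^ 2) := by
  apply Summable.of_norm
  exact Summable.of_nonneg_of_le (fun k => norm_nonneg _) (term_le x)
    (Real.summable_pow_div_factorial |x|)

lemma continuousOn_E (c : ℝ) : ContinuousOn E (Icc (-c) c) := by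
  have hsum : Summable (fun k : ℕ => |c| ^ k / (k.factorial : ℝ)) :=
    Real.summable_pow_div_factorial |c|
  have := tendstoUniformlyOn_tsum (f := fun (k : ℕ) (x : ℝ) => x ^ k / ((k.factorial : ℝ)) ^ 2)
    hsum (s := Icc (-c) c) ?_
  · exact this.continuousOn (Frequently.of_forall fun v => by
      apply continuousOn_finset_sum
      intro i _
      fun_prop)
  · intro k x hx
    refine (term_le x k).trans ?_
    have hxc : |x| ≤ |c| := abs_le_abs hx.2 (by linarith [hx.1])
    gcongr

lemma continuous_E : Continuous E := by
  rw [continuous_iff_continuousAt]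
  intro x
  have h : Icc (-(|x|+1)) (|x|+1) ∈ nhds x := by
    apply Icc_mem_nhds <;> linarith [neg_abs_le x, le_abs_self x]
  exact (continuousOn_E (|x|+1)).continuousAt h

lemma besselI0_eq {x : ℝ} (hx : 0 ≤ x) : besselI0 (2 * Real.sqrt x) = E x := by
  unfold besselI0 E
  apply tsum_congr
  intro k
  congr 1
  rw [pow_mul, show (2 * Real.sqrt x / 2) = Real.sqrt x by ring, Real.sq_sqrt hx]

lemma E_nonneg {x : ℝ} (hx : 0 ≤ x) : 0 ≤ E x :=
  tsum_nonneg fun k => by positivity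

lemma E_mono {x y : ℝ} (hx : 0 ≤ x) (hxy : x ≤ y) : E x ≤ E y := by
  apply Summable.tsum_le_tsum _ (summable_E x) (summable_E y)
  intro k
  gcongr

noncomputable def eps (M : ℝ) (n : ℕ) : ℝ := ∑' k : ℕ, M ^ (k + n) / (((k + n).factorial : ℝ)) ^ 2

lemma tail_bound {M x : ℝ} (hx : 0 ≤ x) (hxM : x ≤ M) (n : ℕ) :
    |E x - P n x| ≤ eps M n := by
  have h := Summable.sum_add_tsum_nat_add (f := fun k : ℕ => x ^ k / ((k.factorial : ℝ)) ^ 2) n (summable_E x)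
  have hx' : E x - P n x = ∑' k : ℕ, x ^ (k + n) / (((k + n).factorial : ℝ)) ^ 2 := by
    rw [E, P, ← h]; ring
  rw [hx', abs_of_nonneg (tsum_nonneg fun k => by positivity)]
  apply Summable.tsum_le_tsum _
    ((summable_nat_add_iff (f := fun k : ℕ => x ^ k / ((k.factorial : ℝ)) ^ 2) n).2 (summable_E x))
    ((summable_nat_add_iff (f := fun k : ℕ => M ^ k / ((k.factorial : ℝ)) ^ 2) n).2 (summable_E M))
  intro k
  gcongr

lemma tendsto_eps (M : ℝ) : Tendsto (eps M) atTop (nhds 0) :=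
  tendsto_sum_nat_add (f := fun k : ℕ => M ^ k / ((k.factorial : ℝ)) ^ 2)

lemma P_continuous (n : ℕ) : Continuous (P n) := by
  unfold P
  apply continuous_finset_sum
  intro i _
  fun_prop


lemma rect_integrable (F : ℝ → ℝ → ℝ) (hF : Continuous (Function.uncurry F)) (a b c d : ℝ) :
    Integrable (Function.uncurry F) ((volume.restrict (Ioc a b)).prod (volume.restrict (Ioc c d))) := by
  rw [Measure.prod_restrict]
  exact ((hF.continuousOn.integrableOn_compact (isCompact_Icc.prod isCompact_Icc)).mono_set
    (prod_mono Ioc_subset_Icc_self Ioc_subset_Icc_self))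

lemma rect_swap (F : ℝ → ℝ → ℝ) (hF : Continuous (Function.uncurry F)) {a b c d : ℝ}
    (hab : a ≤ b) (hcd : c ≤ d) :
    ∫ x in a..b, ∫ y in c..d, F x y = ∫ y in c..d, ∫ x in a..b, F x y := by
  have h1 : ∀ x, (∫ y in c..d, F x y) = ∫ y in Ioc c d, F x y := fun x => integral_of_le hcd
  have h2 : ∀ y, (∫ x in a..b, F x y) = ∫ x in Ioc a b, F x y := fun y => integral_of_le hab
  simp_rw [h1, h2, integral_of_le hab, integral_of_le hcd]
  exact MeasureTheory.integral_integral_swap (rect_integrable F hF a b c d)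

set_option maxHeartbeats 1000000 in
lemma tri_swap (G : ℝ → ℝ → ℝ) (hG : Continuous (Function.uncurry G)) {s : ℝ} (hs : 0 ≤ s) :
    ∫ σ in (0:ℝ)..s, ∫ ξ in (0:ℝ)..σ, G σ ξ = ∫ ξ in (0:ℝ)..s, ∫ σ in ξ..s, G σ ξ := by
  set H : ℝ → ℝ → ℝ := fun σ ξ => if ξ ≤ σ then G σ ξ else 0 with hH
  have hHind : Function.uncurry H = Set.indicator {p : ℝ × ℝ | p.2 ≤ p.1} (Function.uncurry G) := by
    funext p
    by_cases h : p.2 ≤ p.1 <;> simp [Function.uncurry, H, h, Set.indicator, Set.mem_setOf_eq]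
  have hmeas : MeasurableSet {p : ℝ × ℝ | p.2 ≤ p.1} :=
    (isClosed_le continuous_snd continuous_fst).measurableSet
  have hint : Integrable (Function.uncurry H)
      ((volume.restrict (Ioc 0 s)).prod (volume.restrict (Ioc 0 s))) := by
    rw [hHind]
    exact (rect_integrable G hG 0 s 0 s).indicator hmeas
  have hL : (∫ σ in (0:ℝ)..s, ∫ ξ in (0:ℝ)..σ, G σ ξ)
      = ∫ σ in Ioc (0:ℝ) s, ∫ ξ in Ioc (0:ℝ) s, H σ ξ := by
    rw [integral_of_le hs]
    apply setIntegral_congr_fun measurableSet_Ioc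
    intro σ hσ
    show (∫ ξ in (0:ℝ)..σ, G σ ξ) = ∫ ξ in Ioc (0:ℝ) s, H σ ξ
    have h1 : (fun ξ => H σ ξ) = Set.indicator (Iic σ) (G σ) := by
      funext ξ; by_cases h : ξ ≤ σ <;> simp [H, h, Set.indicator, Set.mem_Iic]
    rw [integral_of_le hσ.1.le, h1, MeasureTheory.integral_indicator measurableSet_Iic,
      Measure.restrict_restrict measurableSet_Iic,
      show Iic σ ∩ Ioc 0 s = Ioc 0 σ from by
        ext x
        simp only [Set.mem_inter_iff, Set.mem_Iic, Set.mem_Ioc]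
        exact ⟨fun ⟨h1, h2, _⟩ => ⟨h2, h1⟩, fun ⟨h1, h2⟩ => ⟨h2, h1, h2.trans hσ.2⟩⟩]
  have hR : (∫ ξ in (0:ℝ)..s, ∫ σ in ξ..s, G σ ξ)
      = ∫ ξ in Ioc (0:ℝ) s, ∫ σ in Ioc (0:ℝ) s, H σ ξ := by
    rw [integral_of_le hs]
    apply setIntegral_congr_fun measurableSet_Ioc
    intro ξ hξ
    show (∫ σ in ξ..s, G σ ξ) = ∫ σ in Ioc (0:ℝ) s, H σ ξ
    have h1 : (fun σ => H σ ξ) = Set.indicator (Ici ξ) (fun σ => G σ ξ) := by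
      funext σ; by_cases h : ξ ≤ σ <;> simp [H, h, Set.indicator, Set.mem_Ici]
    rw [integral_of_le hξ.2, h1, MeasureTheory.integral_indicator measurableSet_Ici,
      Measure.restrict_restrict measurableSet_Ici]
    rw [show Ici ξ ∩ Ioc 0 s = Icc ξ s by
      ext x
      simp only [Set.mem_inter_iff, Set.mem_Ici, Set.mem_Ioc, Set.mem_Icc]
      exact ⟨fun ⟨h1, _, h3⟩ => ⟨h1, h3⟩, fun ⟨h1, h2⟩ => ⟨h1, hξ.1.trans_le h1, h2⟩⟩]
    exact MeasureTheory.integral_Icc_eq_integral_Ioc.symm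
  rw [hL, hR]
  exact MeasureTheory.integral_integral_swap hint

lemma cont4 {α : Type*} [TopologicalSpace α] {F : ℝ → ℝ → ℝ → ℝ → ℝ}
    (hF : Continuous fun q : (ℝ × ℝ) × ℝ × ℝ => F q.1.1 q.1.2 q.2.1 q.2.2)
    {p1 p2 p3 p4 : α → ℝ} (h1 : Continuous p1) (h2 : Continuous p2) (h3 : Continuous p3)
    (h4 : Continuous p4) : Continuous fun a => F (p1 a) (p2 a) (p3 a) (p4 a) :=
  hF.comp ((h1.prodMk h2).prodMk (h3.prodMk h4))

section swap4
variable {F : ℝ → ℝ → ℝ → ℝ → ℝ} {α : Type*} [TopologicalSpace α]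

def HC (F : ℝ → ℝ → ℝ → ℝ → ℝ) : Prop :=
  Continuous fun q : (ℝ × ℝ) × ℝ × ℝ => F q.1.1 q.1.2 q.2.1 q.2.2

lemma contA' (hF : HC F) {p1 p3 u : α → ℝ} (h1 : Continuous p1) (h3 : Continuous p3)
    (hu : Continuous u) :
    Continuous fun a => ∫ ζ in (0:ℝ)..(u a), F (p1 a) (u a) (p3 a) ζ := by
  apply intervalIntegral.continuous_parametric_intervalIntegral_of_continuous
    (f := fun (a : α) ζ => F (p1 a) (u a) (p3 a) ζ) ?_ hu
  exact cont4 hF (h1.comp continuous_fst) (hu.comp continuous_fst) (h3.comp continuous_fst)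
    continuous_snd

lemma contB' (hF : HC F) (t : ℝ) {p1 p3 : α → ℝ} (h1 : Continuous p1) (h3 : Continuous p3) :
    Continuous fun a => ∫ τ in (0:ℝ)..t, ∫ ζ in (0:ℝ)..τ, F (p1 a) τ (p3 a) ζ := by
  apply intervalIntegral.continuous_parametric_intervalIntegral_of_continuous'
    (f := fun (a : α) τ => ∫ ζ in (0:ℝ)..τ, F (p1 a) τ (p3 a) ζ)
  exact contA' hF (h1.comp continuous_fst) (h3.comp continuous_fst) continuous_snd

lemma contC' (hF : HC F) (t : ℝ) {p1 p3 u : α → ℝ} (h1 : Continuous p1) (h3 : Continuous p3)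
    (hu : Continuous u) :
    Continuous fun a => ∫ τ in (u a)..t, F (p1 a) τ (p3 a) (u a) := by
  have h : Continuous fun a => ∫ τ in t..(u a), F (p1 a) τ (p3 a) (u a) := by
    apply intervalIntegral.continuous_parametric_intervalIntegral_of_continuous
      (f := fun (a : α) τ => F (p1 a) τ (p3 a) (u a)) ?_ hu
    exact cont4 hF (h1.comp continuous_fst) continuous_snd (h3.comp continuous_fst)
      (hu.comp continuous_fst)
  have heq : (fun a => ∫ τ in (u a)..t, F (p1 a) τ (p3 a) (u a))
      = fun a => -∫ τ in t..(u a), F (p1 a) τ (p3 a) (u a) := by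
    funext a; rw [intervalIntegral.integral_symm]
  rw [heq]
  exact h.neg

lemma swap4 (hF : HC F) {s t : ℝ} (hs : 0 ≤ s) (ht : 0 ≤ t) :
    (∫ σ in (0:ℝ)..s, ∫ τ in (0:ℝ)..t, ∫ ξ in (0:ℝ)..σ, ∫ ζ in (0:ℝ)..τ, F σ τ ξ ζ)
    = ∫ ξ in (0:ℝ)..s, ∫ ζ in (0:ℝ)..t, ∫ σ in ξ..s, ∫ τ in ζ..t, F σ τ ξ ζ := by
  have huIcc : uIcc (0:ℝ) s = Icc 0 s := uIcc_of_le hs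
  calc
    (∫ σ in (0:ℝ)..s, ∫ τ in (0:ℝ)..t, ∫ ξ in (0:ℝ)..σ, ∫ ζ in (0:ℝ)..τ, F σ τ ξ ζ)
        = ∫ σ in (0:ℝ)..s, ∫ ξ in (0:ℝ)..σ, ∫ τ in (0:ℝ)..t, ∫ ζ in (0:ℝ)..τ, F σ τ ξ ζ := by
          apply intervalIntegral.integral_congr
          intro σ hσ
          rw [huIcc] at hσ
          refine rect_swap (fun τ ξ => ∫ ζ in (0:ℝ)..τ, F σ τ ξ ζ) ?_ ht hσ.1
          show Continuous fun q : ℝ × ℝ => ∫ ζ in (0:ℝ)..q.1, F σ q.1 q.2 ζ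
          exact contA' hF continuous_const continuous_snd continuous_fst
    _ = ∫ ξ in (0:ℝ)..s, ∫ σ in ξ..s, ∫ τ in (0:ℝ)..t, ∫ ζ in (0:ℝ)..τ, F σ τ ξ ζ := by
          refine tri_swap (fun σ ξ => ∫ τ in (0:ℝ)..t, ∫ ζ in (0:ℝ)..τ, F σ τ ξ ζ) ?_ hs
          show Continuous fun p : ℝ × ℝ => ∫ τ in (0:ℝ)..t, ∫ ζ in (0:ℝ)..τ, F p.1 τ p.2 ζ
          exact contB' hF t continuous_fst continuous_snd
    _ = ∫ ξ in (0:ℝ)..s, ∫ σ in ξ..s, ∫ ζ in (0:ℝ)..t, ∫ τ in ζ..t, F σ τ ξ ζ := by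
          apply intervalIntegral.integral_congr
          intro ξ _
          apply intervalIntegral.integral_congr
          intro σ _
          refine tri_swap (fun τ ζ => F σ τ ξ ζ) ?_ ht
          exact cont4 hF (by fun_prop) (by fun_prop) (by fun_prop) (by fun_prop)
    _ = ∫ ξ in (0:ℝ)..s, ∫ ζ in (0:ℝ)..t, ∫ σ in ξ..s, ∫ τ in ζ..t, F σ τ ξ ζ := by
          apply intervalIntegral.integral_congr
          intro ξ hξ
          rw [huIcc] at hξ
          refine rect_swap (fun σ ζ => ∫ τ in ζ..t, F σ τ ξ ζ) ?_ hξ.2 ht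
          show Continuous fun q : ℝ × ℝ => ∫ τ in q.2..t, F q.1 τ ξ q.2
          exact contC' hF t continuous_fst continuous_const continuous_snd

end swap4

section helpers
variable {A B : ℝ → ℝ → ℝ}

lemma sliceL (hA : Continuous fun p : ℝ × ℝ => A p.1 p.2) (σ : ℝ) :
    Continuous fun τ => A σ τ := hA.comp (continuous_const.prodMk continuous_id)

lemma contInt (hA : Continuous fun p : ℝ × ℝ => A p.1 p.2) (t : ℝ) :
    Continuous fun σ => ∫ τ in (0:ℝ)..t, A σ τ :=
  intervalIntegral.continuous_parametric_intervalIntegral_of_continuous' (f := A) hA 0 t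

lemma dint_add (hA : Continuous fun p : ℝ × ℝ => A p.1 p.2)
    (hB : Continuous fun p : ℝ × ℝ => B p.1 p.2) (s t : ℝ) :
    (∫ σ in (0:ℝ)..s, ∫ τ in (0:ℝ)..t, (A σ τ + B σ τ)) =
      (∫ σ in (0:ℝ)..s, ∫ τ in (0:ℝ)..t, A σ τ) +
        ∫ σ in (0:ℝ)..s, ∫ τ in (0:ℝ)..t, B σ τ := by
  have h1 : ∀ σ, (∫ τ in (0:ℝ)..t, (A σ τ + B σ τ))
      = (∫ τ in (0:ℝ)..t, A σ τ) + ∫ τ in (0:ℝ)..t, B σ τ := fun σ =>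
    intervalIntegral.integral_add ((sliceL hA σ).intervalIntegrable _ _)
      ((sliceL hB σ).intervalIntegrable _ _)
  simp_rw [h1]
  exact intervalIntegral.integral_add ((contInt hA t).intervalIntegrable _ _)
    ((contInt hB t).intervalIntegrable _ _)

lemma dint_cmul (c : ℝ) (s t : ℝ) :
    (∫ σ in (0:ℝ)..s, ∫ τ in (0:ℝ)..t, c * A σ τ)
      = c * ∫ σ in (0:ℝ)..s, ∫ τ in (0:ℝ)..t, A σ τ := by
  simp_rw [intervalIntegral.integral_const_mul]

lemma dint_mono (hA : Continuous fun p : ℝ × ℝ => A p.1 p.2)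
    (hB : Continuous fun p : ℝ × ℝ => B p.1 p.2) {s t : ℝ} (hs : 0 ≤ s) (ht : 0 ≤ t)
    (hle : ∀ σ ∈ Icc 0 s, ∀ τ ∈ Icc 0 t, A σ τ ≤ B σ τ) :
    (∫ σ in (0:ℝ)..s, ∫ τ in (0:ℝ)..t, A σ τ)
      ≤ ∫ σ in (0:ℝ)..s, ∫ τ in (0:ℝ)..t, B σ τ := by
  apply intervalIntegral.integral_mono_on hs ((contInt hA t).intervalIntegrable _ _)
    ((contInt hB t).intervalIntegrable _ _)
  intro σ hσ
  apply intervalIntegral.integral_mono_on ht ((sliceL hA σ).intervalIntegrable _ _)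
    ((sliceL hB σ).intervalIntegrable _ _)
  intro τ hτ
  exact hle σ hσ τ hτ

lemma poly_dint (c : ℝ) (m : ℕ) (s t : ℝ) :
    (∫ σ in (0:ℝ)..s, ∫ τ in (0:ℝ)..t, c * (σ * τ) ^ m)
      = c * (s ^ (m+1) * t ^ (m+1)) / ((m:ℝ)+1) ^ 2 := by
  have h1 : ∀ σ, (∫ τ in (0:ℝ)..t, c * (σ * τ) ^ m)
      = (c * σ ^ m * (t ^ (m+1) / ((m:ℝ)+1))) := by
    intro σ
    have h : ∀ τ : ℝ, c * (σ * τ) ^ m = (c * σ ^ m) * τ ^ m := fun τ => by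
      rw [mul_pow]; ring
    simp_rw [h, intervalIntegral.integral_const_mul, integral_pow]
    rw [zero_pow (Nat.succ_ne_zero m)]
    push_cast
    ring
  simp_rw [h1]
  have h2 : ∀ σ : ℝ, c * σ ^ m * (t ^ (m+1) / ((m:ℝ)+1))
      = (c * (t ^ (m+1) / ((m:ℝ)+1))) * σ ^ m := fun σ => by ring
  simp_rw [h2, intervalIntegral.integral_const_mul, integral_pow]
  rw [zero_pow (Nat.succ_ne_zero m)]
  have hm : ((m:ℝ)+1) ≠ 0 := by positivity
  field_simp
  ring

lemma shift_pow_int (k : ℕ) (ζ t : ℝ) :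
    (∫ τ in ζ..t, (τ - ζ) ^ k) = (t - ζ) ^ (k+1) / ((k:ℝ)+1) := by
  rw [intervalIntegral.integral_comp_sub_right (fun x => x ^ k) ζ]
  rw [sub_self, integral_pow, zero_pow (Nat.succ_ne_zero k)]
  push_cast
  ring

end helpers

lemma kernel_int (n : ℕ) (M ξ s ζ t : ℝ) :
    (∫ σ in ξ..s, ∫ τ in ζ..t, P n (M * (σ - ξ) * (τ - ζ)))
      = ∑ k ∈ Finset.range n,
          M ^ k * ((s - ξ) ^ (k+1) * (t - ζ) ^ (k+1)) / (((k+1).factorial : ℝ)) ^ 2 := by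
  have h1 : ∀ σ, (∫ τ in ζ..t, P n (M * (σ - ξ) * (τ - ζ)))
      = ∑ k ∈ Finset.range n,
          (M * (σ - ξ)) ^ k / ((k.factorial : ℝ))^2 * ((t - ζ) ^ (k+1) / ((k:ℝ)+1)) := by
    intro σ
    unfold P
    rw [intervalIntegral.integral_finset_sum]
    · apply Finset.sum_congr rfl
      intro k _
      have h : ∀ τ : ℝ, (M * (σ - ξ) * (τ - ζ)) ^ k / ((k.factorial : ℝ))^2
          = ((M * (σ - ξ)) ^ k / ((k.factorial : ℝ))^2) * (τ - ζ) ^ k := fun τ => by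
        rw [mul_pow]; ring
      simp_rw [h, intervalIntegral.integral_const_mul, shift_pow_int]
    · intro k _
      apply Continuous.intervalIntegrable
      fun_prop
  simp_rw [h1]
  rw [intervalIntegral.integral_finset_sum]
  · apply Finset.sum_congr rfl
    intro k _
    have h : ∀ σ : ℝ, (M * (σ - ξ)) ^ k / ((k.factorial : ℝ))^2 * ((t - ζ) ^ (k+1) / ((k:ℝ)+1))
        = (M ^ k / ((k.factorial : ℝ))^2 * ((t - ζ) ^ (k+1) / ((k:ℝ)+1))) * (σ - ξ) ^ k :=
      fun σ => by rw [mul_pow]; ring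
    simp_rw [h, intervalIntegral.integral_const_mul, shift_pow_int]
    have hk : ((k:ℝ)+1) ≠ 0 := by positivity
    have hfact : (((k+1).factorial : ℝ)) = ((k:ℝ)+1) * (k.factorial : ℝ) := by
      rw [Nat.factorial_succ]; push_cast; ring
    rw [hfact]
    have hkf : (k.factorial : ℝ) ≠ 0 := Nat.cast_ne_zero.2 k.factorial_ne_zero
    field_simp
  · intro k _
    apply Continuous.intervalIntegrable
    fun_prop

lemma Psucc (n : ℕ) (M a b : ℝ) :
    P (n+1) (M * a * b) = 1 + M * ∑ k ∈ Finset.range n,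
        M ^ k * (a ^ (k+1) * b ^ (k+1)) / (((k+1).factorial : ℝ)) ^ 2 := by
  rw [P, Finset.sum_range_succ']
  rw [Finset.mul_sum]
  simp only [pow_zero, Nat.factorial_zero, Nat.cast_one, one_pow, div_one]
  rw [add_comm]
  congr 1
  apply Finset.sum_congr rfl
  intro k _
  rw [mul_pow, mul_pow]
  ring

lemma contD {H : ℝ → ℝ → ℝ → ℝ → ℝ} (hH : HC H) :
    Continuous fun p : ℝ × ℝ => ∫ ξ in (0:ℝ)..p.1, ∫ ζ in (0:ℝ)..p.2, H p.1 p.2 ξ ζ := by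
  apply intervalIntegral.continuous_parametric_intervalIntegral_of_continuous
    (f := fun (p : ℝ × ℝ) ξ => ∫ ζ in (0:ℝ)..p.2, H p.1 p.2 ξ ζ) ?_ continuous_fst
  show Continuous fun q : (ℝ × ℝ) × ℝ => ∫ ζ in (0:ℝ)..q.1.2, H q.1.1 q.1.2 q.2 ζ
  apply intervalIntegral.continuous_parametric_intervalIntegral_of_continuous
    (f := fun (q : (ℝ × ℝ) × ℝ) ζ => H q.1.1 q.1.2 q.2 ζ) ?_ (continuous_snd.comp continuous_fst)
  exact cont4 hH (by fun_prop) (by fun_prop) (by fun_prop) (by fun_prop)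

lemma dint_sub {A B : ℝ → ℝ → ℝ} (hA : Continuous fun p : ℝ × ℝ => A p.1 p.2)
    (hB : Continuous fun p : ℝ × ℝ => B p.1 p.2) (s t : ℝ) :
    (∫ σ in (0:ℝ)..s, ∫ τ in (0:ℝ)..t, (A σ τ - B σ τ)) =
      (∫ σ in (0:ℝ)..s, ∫ τ in (0:ℝ)..t, A σ τ) -
        ∫ σ in (0:ℝ)..s, ∫ τ in (0:ℝ)..t, B σ τ := by
  have h1 : ∀ σ, (∫ τ in (0:ℝ)..t, (A σ τ - B σ τ))
      = (∫ τ in (0:ℝ)..t, A σ τ) - ∫ τ in (0:ℝ)..t, B σ τ := fun σ =>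
    intervalIntegral.integral_sub ((sliceL hA σ).intervalIntegrable _ _)
      ((sliceL hB σ).intervalIntegrable _ _)
  simp_rw [h1]
  exact intervalIntegral.integral_sub ((contInt hA t).intervalIntegrable _ _)
    ((contInt hB t).intervalIntegrable _ _)

lemma IND (M : ℝ) (hM : 0 ≤ M) (f g : ℝ → ℝ → ℝ) (Cf : ℝ)
    (hf : Continuous fun p : ℝ × ℝ => f p.1 p.2)
    (hg : Continuous fun p : ℝ × ℝ => g p.1 p.2)
    (hCf : ∀ σ ∈ Icc (0:ℝ) 1, ∀ τ ∈ Icc (0:ℝ) 1, f σ τ ≤ Cf)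
    (hineq : ∀ s ∈ Icc (0:ℝ) 1, ∀ t ∈ Icc (0:ℝ) 1,
      f s t ≤ g s t + M * ∫ ξ in (0:ℝ)..s, ∫ ζ in (0:ℝ)..t, f ξ ζ) :
    ∀ n : ℕ, ∀ s ∈ Icc (0:ℝ) 1, ∀ t ∈ Icc (0:ℝ) 1,
      f s t ≤ g s t
        + M * (∫ ξ in (0:ℝ)..s, ∫ ζ in (0:ℝ)..t, g ξ ζ * P n (M*(s-ξ)*(t-ζ)))
        + Cf * M^(n+1) * (s*t)^(n+1) / (((n+1).factorial : ℝ))^2 := by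
  intro n
  induction n with
  | zero =>
    intro s hs t ht
    have h0 : (∫ ξ in (0:ℝ)..s, ∫ ζ in (0:ℝ)..t, g ξ ζ * P 0 (M*(s-ξ)*(t-ζ))) = 0 := by
      simp [P]
    rw [h0]
    have hmono := dint_mono (A := f) (B := fun σ τ => Cf * (σ*τ)^0) hf (by fun_prop)
      hs.1 ht.1 (fun σ hσ τ hτ => by
        simpa using hCf σ ⟨hσ.1, hσ.2.trans hs.2⟩ τ ⟨hτ.1, hτ.2.trans ht.2⟩)
    rw [poly_dint] at hmono
    have hstep := mul_le_mul_of_nonneg_left hmono hM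
    have h1 := hineq s hs t ht
    simp only [Nat.factorial_one, pow_one, zero_add, pow_zero] at *
    norm_num at hmono hstep ⊢
    nlinarith [hstep, h1]
  | succ n ih =>
    intro s hs t ht
    have hHC : HC (fun σ τ ξ ζ => g ξ ζ * P n (M*(σ-ξ)*(τ-ζ))) := by
      unfold HC
      exact (hg.comp (by fun_prop)).mul ((P_continuous n).comp (by fun_prop))
    have hK : Continuous fun p : ℝ × ℝ =>
        ∫ ξ in (0:ℝ)..p.1, ∫ ζ in (0:ℝ)..p.2, g ξ ζ * P n (M*(p.1-ξ)*(p.2-ζ)) := contD hHC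
    have hSn : Continuous fun p : ℝ × ℝ => (∑ k ∈ Finset.range n,
        M ^ k * ((s - p.1) ^ (k+1) * (t - p.2) ^ (k+1)) / (((k+1).factorial : ℝ)) ^ 2) := by
      apply continuous_finset_sum
      intro k _
      fun_prop
    -- Step 1: monotone
    have hmono := dint_mono (A := f) (B := fun σ τ => g σ τ
        + M * (∫ ξ in (0:ℝ)..σ, ∫ ζ in (0:ℝ)..τ, g ξ ζ * P n (M*(σ-ξ)*(τ-ζ)))
        + Cf * M^(n+1) * (σ*τ)^(n+1) / (((n+1).factorial : ℝ))^2)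
      hf ((hg.add (continuous_const.mul hK)).add (by fun_prop))
      hs.1 ht.1 (fun σ hσ τ hτ => ih σ ⟨hσ.1, hσ.2.trans hs.2⟩ τ ⟨hτ.1, hτ.2.trans ht.2⟩)
    -- Step 2: split the integral of B
    have hsplit : (∫ σ in (0:ℝ)..s, ∫ τ in (0:ℝ)..t, (g σ τ
          + M * (∫ ξ in (0:ℝ)..σ, ∫ ζ in (0:ℝ)..τ, g ξ ζ * P n (M*(σ-ξ)*(τ-ζ)))
          + Cf * M^(n+1) * (σ*τ)^(n+1) / (((n+1).factorial : ℝ))^2))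
        = (∫ σ in (0:ℝ)..s, ∫ τ in (0:ℝ)..t, g σ τ)
          + M * (∫ σ in (0:ℝ)..s, ∫ τ in (0:ℝ)..t,
              ∫ ξ in (0:ℝ)..σ, ∫ ζ in (0:ℝ)..τ, g ξ ζ * P n (M*(σ-ξ)*(τ-ζ)))
          + (Cf * M^(n+1) / (((n+1).factorial : ℝ))^2) * (s^(n+1+1) * t^(n+1+1)) / (((n+1:ℕ):ℝ)+1)^2 := by
      rw [dint_add (A := fun σ τ => g σ τ
          + M * (∫ ξ in (0:ℝ)..σ, ∫ ζ in (0:ℝ)..τ, g ξ ζ * P n (M*(σ-ξ)*(τ-ζ))))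
          (B := fun σ τ => Cf * M^(n+1) * (σ*τ)^(n+1) / (((n+1).factorial : ℝ))^2)
          (hg.add (continuous_const.mul hK)) (by fun_prop) s t]
      rw [dint_add (A := g) (B := fun σ τ => M * (∫ ξ in (0:ℝ)..σ, ∫ ζ in (0:ℝ)..τ,
          g ξ ζ * P n (M*(σ-ξ)*(τ-ζ)))) hg (continuous_const.mul hK) s t]
      rw [dint_cmul (A := fun σ τ => ∫ ξ in (0:ℝ)..σ, ∫ ζ in (0:ℝ)..τ,
          g ξ ζ * P n (M*(σ-ξ)*(τ-ζ))) M s t]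
      congr 1
      have hpw : ∀ σ τ : ℝ, Cf * M^(n+1) * (σ*τ)^(n+1) / (((n+1).factorial : ℝ))^2
          = (Cf * M^(n+1) / (((n+1).factorial : ℝ))^2) * (σ*τ)^(n+1) := fun σ τ => by ring
      simp_rw [hpw]
      rw [poly_dint]
    -- Step 3: Fubini on the middle term
    have hswap : (∫ σ in (0:ℝ)..s, ∫ τ in (0:ℝ)..t,
          ∫ ξ in (0:ℝ)..σ, ∫ ζ in (0:ℝ)..τ, g ξ ζ * P n (M*(σ-ξ)*(τ-ζ)))
        = ∫ ξ in (0:ℝ)..s, ∫ ζ in (0:ℝ)..t, g ξ ζ * (∑ k ∈ Finset.range n,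
            M ^ k * ((s - ξ) ^ (k+1) * (t - ζ) ^ (k+1)) / (((k+1).factorial : ℝ)) ^ 2) := by
      rw [swap4 hHC hs.1 ht.1]
      simp_rw [intervalIntegral.integral_const_mul, kernel_int]
    -- Step 4: combine first two terms into the P (n+1) integral
    have hcomb : (∫ σ in (0:ℝ)..s, ∫ τ in (0:ℝ)..t, g σ τ)
          + M * (∫ ξ in (0:ℝ)..s, ∫ ζ in (0:ℝ)..t, g ξ ζ * (∑ k ∈ Finset.range n,
            M ^ k * ((s - ξ) ^ (k+1) * (t - ζ) ^ (k+1)) / (((k+1).factorial : ℝ)) ^ 2))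
        = ∫ ξ in (0:ℝ)..s, ∫ ζ in (0:ℝ)..t, g ξ ζ * P (n+1) (M*(s-ξ)*(t-ζ)) := by
      have hpt : ∀ ξ ζ : ℝ, g ξ ζ * P (n+1) (M*(s-ξ)*(t-ζ))
          = g ξ ζ + M * (g ξ ζ * (∑ k ∈ Finset.range n,
            M ^ k * ((s - ξ) ^ (k+1) * (t - ζ) ^ (k+1)) / (((k+1).factorial : ℝ)) ^ 2)) := by
        intro ξ ζ
        rw [Psucc]
        ring
      simp_rw [hpt]
      rw [dint_add (A := g) (B := fun ξ ζ => M * (g ξ ζ * (∑ k ∈ Finset.range n,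
            M ^ k * ((s - ξ) ^ (k+1) * (t - ζ) ^ (k+1)) / (((k+1).factorial : ℝ)) ^ 2)))
          hg (continuous_const.mul (hg.mul hSn)) s t]
      rw [dint_cmul (A := fun ξ ζ => g ξ ζ * (∑ k ∈ Finset.range n,
            M ^ k * ((s - ξ) ^ (k+1) * (t - ζ) ^ (k+1)) / (((k+1).factorial : ℝ)) ^ 2)) M s t]
    -- assemble
    have hstep := mul_le_mul_of_nonneg_left hmono hM
    have h1 := hineq s hs t ht
    rw [hsplit, hswap] at hstep
    have halg : M * ((∫ σ in (0:ℝ)..s, ∫ τ in (0:ℝ)..t, g σ τ)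
          + M * (∫ ξ in (0:ℝ)..s, ∫ ζ in (0:ℝ)..t, g ξ ζ * (∑ k ∈ Finset.range n,
            M ^ k * ((s - ξ) ^ (k+1) * (t - ζ) ^ (k+1)) / (((k+1).factorial : ℝ)) ^ 2))
          + (Cf * M^(n+1) / (((n+1).factorial : ℝ))^2) * (s^(n+1+1) * t^(n+1+1)) / (((n+1:ℕ):ℝ)+1)^2)
        = M * (∫ ξ in (0:ℝ)..s, ∫ ζ in (0:ℝ)..t, g ξ ζ * P (n+1) (M*(s-ξ)*(t-ζ)))
          + Cf * M^(n+1+1) * (s*t)^(n+1+1) / (((n+1+1).factorial : ℝ))^2 := by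
      rw [mul_add, hcomb]
      congr 1
      have hfact2 : (((n+2).factorial : ℝ)) = ((n:ℝ)+2) * (((n+1).factorial : ℝ)) := by
        rw [show n+2 = (n+1)+1 from rfl, Nat.factorial_succ]
        push_cast
        ring
      have hc1 : (((n+1).factorial : ℝ)) ≠ 0 := Nat.cast_ne_zero.2 (n+1).factorial_ne_zero
      have hn2 : ((n:ℝ)+2) ≠ 0 := by positivity
      rw [show n+1+1 = n+2 from rfl, hfact2, mul_pow]
      push_cast
      field_simp
      ring
    rw [halg] at hstep
    linarith [h1, hstep]

lemma main (M : ℝ) (hM : 0 ≤ M) (f g : ℝ → ℝ → ℝ)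
    (hf : Continuous fun p : ℝ × ℝ => f p.1 p.2)
    (hg : Continuous fun p : ℝ × ℝ => g p.1 p.2)
    (hineq : ∀ s ∈ Icc (0:ℝ) 1, ∀ t ∈ Icc (0:ℝ) 1,
      f s t ≤ g s t + M * ∫ ξ in (0:ℝ)..s, ∫ ζ in (0:ℝ)..t, f ξ ζ) :
    ∀ s ∈ Icc (0:ℝ) 1, ∀ t ∈ Icc (0:ℝ) 1,
      f s t ≤ g s t + M * ∫ ξ in (0:ℝ)..s, ∫ ζ in (0:ℝ)..t, g ξ ζ * E (M*(s-ξ)*(t-ζ)) := by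
  obtain ⟨Cf, hCf⟩ := (isCompact_Icc.prod isCompact_Icc).bddAbove_image hf.continuousOn
  have hCf' : ∀ σ ∈ Icc (0:ℝ) 1, ∀ τ ∈ Icc (0:ℝ) 1, f σ τ ≤ Cf := fun σ hσ τ hτ =>
    hCf ⟨((σ, τ) : ℝ × ℝ), ⟨hσ, hτ⟩, rfl⟩
  obtain ⟨Cg0, hCg0⟩ := (isCompact_Icc.prod isCompact_Icc).bddAbove_image hg.norm.continuousOn
  set Cg : ℝ := max Cg0 0 with hCgdef
  have hCg : ∀ σ ∈ Icc (0:ℝ) 1, ∀ τ ∈ Icc (0:ℝ) 1, |g σ τ| ≤ Cg := fun σ hσ τ hτ =>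
    le_max_of_le_left (hCg0 ⟨((σ, τ) : ℝ × ℝ), ⟨hσ, hτ⟩, rfl⟩)
  have hCgnn : 0 ≤ Cg := le_max_right _ _
  intro s hs t ht
  have hind := IND M hM f g Cf hf hg hCf' hineq
  -- continuity of kernels
  have hEker : Continuous fun p : ℝ × ℝ => g p.1 p.2 * E (M*(s-p.1)*(t-p.2)) :=
    hg.mul (continuous_E.comp (by fun_prop))
  set L : ℝ := ∫ ξ in (0:ℝ)..s, ∫ ζ in (0:ℝ)..t, g ξ ζ * E (M*(s-ξ)*(t-ζ)) with hLdef
  -- error bound for each n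
  have key : ∀ n : ℕ, f s t ≤ g s t + M * L
      + (M * (Cg * eps M n) + |Cf| * (M^(n+1) / (((n+1).factorial : ℝ))^2)) := by
    intro n
    have hPker : Continuous fun p : ℝ × ℝ => g p.1 p.2 * P n (M*(s-p.1)*(t-p.2)) :=
      hg.mul ((P_continuous n).comp (by fun_prop))
    have hdiff : |L - ∫ ξ in (0:ℝ)..s, ∫ ζ in (0:ℝ)..t, g ξ ζ * P n (M*(s-ξ)*(t-ζ))|
        ≤ Cg * eps M n := by
      rw [hLdef, ← dint_sub hEker hPker s t]
      have hepsnn : 0 ≤ eps M n := tsum_nonneg fun k => by positivity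
      have hinner : ∀ ξ ∈ Set.uIcc (0:ℝ) s,
          |∫ ζ in (0:ℝ)..t, (g ξ ζ * E (M*(s-ξ)*(t-ζ)) - g ξ ζ * P n (M*(s-ξ)*(t-ζ)))|
            ≤ (Cg * eps M n) * t := by
        intro ξ hξ
        rw [Set.uIcc_of_le hs.1] at hξ
        have hb := intervalIntegral.norm_integral_le_of_norm_le_const
          (C := Cg * eps M n)
          (f := fun ζ => g ξ ζ * E (M*(s-ξ)*(t-ζ)) - g ξ ζ * P n (M*(s-ξ)*(t-ζ)))
          (a := (0:ℝ)) (b := t) ?_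
        · rw [Real.norm_eq_abs] at hb
          calc |∫ ζ in (0:ℝ)..t, _| ≤ Cg * eps M n * |t - 0| := hb
            _ = (Cg * eps M n) * t := by rw [sub_zero, abs_of_nonneg ht.1]
        · intro ζ hζ
          rw [Set.uIoc_of_le ht.1] at hζ
          have hξ1 : ξ ∈ Icc (0:ℝ) 1 := ⟨hξ.1, hξ.2.trans hs.2⟩
          have hζ1 : ζ ∈ Icc (0:ℝ) 1 := ⟨hζ.1.le, hζ.2.trans ht.2⟩
          have hx0 : 0 ≤ M*(s-ξ)*(t-ζ) := by
            have := hξ.2; have := hζ.2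
            have h1 : (0:ℝ) ≤ s - ξ := by linarith
            have h2 : (0:ℝ) ≤ t - ζ := by linarith
            positivity
          have hxM : M*(s-ξ)*(t-ζ) ≤ M := by
            have h1 : s - ξ ≤ 1 := by linarith [hξ.1, hs.2]
            have h2 : t - ζ ≤ 1 := by linarith [hζ.1.le, ht.2]
            have h3 : (0:ℝ) ≤ s - ξ := by linarith [hξ.2]
            have h4 : (0:ℝ) ≤ t - ζ := by linarith [hζ.2]
            have ha : 0 ≤ M*(s-ξ) := mul_nonneg hM h3
            calc M*(s-ξ)*(t-ζ) ≤ M*(s-ξ)*1 := mul_le_mul_of_nonneg_left h2 ha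
              _ = M*(s-ξ) := mul_one _
              _ ≤ M*1 := mul_le_mul_of_nonneg_left h1 hM
              _ = M := mul_one _
          show ‖g ξ ζ * E (M*(s-ξ)*(t-ζ)) - g ξ ζ * P n (M*(s-ξ)*(t-ζ))‖ ≤ Cg * eps M n
          rw [Real.norm_eq_abs, ← mul_sub, abs_mul]
          exact mul_le_mul (hCg ξ hξ1 ζ hζ1) (tail_bound hx0 hxM n)
            (abs_nonneg _) hCgnn
      have hb2 := intervalIntegral.norm_integral_le_of_norm_le_const
        (C := (Cg * eps M n) * t)
        (f := fun ξ => ∫ ζ in (0:ℝ)..t, (g ξ ζ * E (M*(s-ξ)*(t-ζ)) - g ξ ζ * P n (M*(s-ξ)*(t-ζ))))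
        (a := (0:ℝ)) (b := s) ?_
      · rw [Real.norm_eq_abs] at hb2
        calc _ ≤ (Cg * eps M n) * t * |s - 0| := hb2
          _ ≤ Cg * eps M n := by
            rw [sub_zero, abs_of_nonneg hs.1]
            have hepst : 0 ≤ Cg * eps M n := mul_nonneg hCgnn hepsnn
            have e1 : Cg * eps M n * t ≤ Cg * eps M n := by nlinarith [ht.2]
            have e2 : 0 ≤ Cg * eps M n * t := mul_nonneg hepst ht.1
            nlinarith [hs.2, e1, e2, hs.1]
      · intro ξ hξ
        rw [Real.norm_eq_abs]
        exact hinner ξ (uIoc_subset_uIcc hξ)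
    have h1 := hind n s hs t ht
    have h2 : (∫ ξ in (0:ℝ)..s, ∫ ζ in (0:ℝ)..t, g ξ ζ * P n (M*(s-ξ)*(t-ζ)))
        ≤ L + Cg * eps M n := by
      have := abs_sub_abs_le_abs_sub L (∫ ξ in (0:ℝ)..s, ∫ ζ in (0:ℝ)..t,
        g ξ ζ * P n (M*(s-ξ)*(t-ζ)))
      have h3 := neg_abs_le (L - ∫ ξ in (0:ℝ)..s, ∫ ζ in (0:ℝ)..t, g ξ ζ * P n (M*(s-ξ)*(t-ζ)))
      linarith [hdiff]
    have h4 : Cf * M^(n+1) * (s*t)^(n+1) / (((n+1).factorial : ℝ))^2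
        ≤ |Cf| * (M^(n+1) / (((n+1).factorial : ℝ))^2) := by
      have hst : 0 ≤ s*t := mul_nonneg hs.1 ht.1
      have hst1 : s*t ≤ 1 := by nlinarith [hs.2, ht.2, hs.1, ht.1]
      have hp1 : 0 ≤ (s*t)^(n+1) := pow_nonneg hst _
      have hp2 : (s*t)^(n+1) ≤ 1 := pow_le_one₀ hst hst1
      have hMp : 0 ≤ M^(n+1) := pow_nonneg hM _
      have hcp : (0:ℝ) < (((n+1).factorial : ℝ))^2 := by positivity
      have hnum : Cf * M^(n+1) * (s*t)^(n+1) ≤ |Cf| * M^(n+1) := by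
        nlinarith [mul_nonneg (mul_nonneg (sub_nonneg.2 (le_abs_self Cf)) hMp) hp1,
          mul_nonneg (mul_nonneg (abs_nonneg Cf) hMp) (sub_nonneg.2 hp2)]
      rw [← mul_div_assoc]
      gcongr
    have h5 := mul_le_mul_of_nonneg_left h2 hM
    linarith [h1, h5, h4]
  -- take the limit
  have hlim : Tendsto (fun n : ℕ => g s t + M * L
      + (M * (Cg * eps M n) + |Cf| * (M^(n+1) / (((n+1).factorial : ℝ))^2)))
      atTop (nhds (g s t + M * L)) := by
    have t1 : Tendsto (fun n : ℕ => M * (Cg * eps M n)) atTop (nhds 0) := by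
      have := (tendsto_eps M).const_mul (M * Cg)
      simp only [mul_zero] at this
      convert this using 1
      funext n
      ring
    have t2 : Tendsto (fun n : ℕ => |Cf| * (M^(n+1) / (((n+1).factorial : ℝ))^2))
        atTop (nhds 0) := by
      have hb : Tendsto (fun n : ℕ => M^n / ((n.factorial : ℝ))^2) atTop (nhds 0) :=
        (summable_E M).tendsto_atTop_zero
      have hb2 : Tendsto (fun n : ℕ => M^(n+1) / (((n+1).factorial : ℝ))^2) atTop (nhds 0) :=
        hb.comp (tendsto_add_atTop_nat 1)
      have := hb2.const_mul |Cf|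
      simpa using this
    have := (t1.add t2)
    simp only [add_zero] at this
    have h := this.const_add (g s t + M * L)
    simpa using h
  exact ge_of_tendsto' hlim key

lemma ext_exists {h : ℝ → ℝ → ℝ}
    (hh : ContinuousOn (fun p : ℝ × ℝ => h p.1 p.2) (Icc (0:ℝ) 1 ×ˢ Icc (0:ℝ) 1)) :
    ∃ h' : ℝ → ℝ → ℝ, (Continuous fun p : ℝ × ℝ => h' p.1 p.2) ∧
      ∀ a ∈ Icc (0:ℝ) 1, ∀ b ∈ Icc (0:ℝ) 1, h' a b = h a b := by
  have hcl : IsClosed (Icc (0:ℝ) 1 ×ˢ Icc (0:ℝ) 1) := isClosed_Icc.prod isClosed_Icc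
  obtain ⟨Fc, hFc⟩ := ContinuousMap.exists_restrict_eq (Y := ℝ) hcl
    ⟨_, hh.restrict⟩
  refine ⟨fun a b => Fc (a, b), Fc.continuous.comp (by fun_prop), ?_⟩
  intro a ha b hb
  have := congrFun (congrArg DFunLike.coe hFc) ⟨(a, b), ⟨ha, hb⟩⟩
  simpa using this

end GP

theorem gronwall_plane (M : ℝ) (hM : 0 ≤ M) (f g : ℝ → ℝ → ℝ)
    (hf : ContinuousOn (fun p : ℝ × ℝ => f p.1 p.2)
      (Set.Icc (0 : ℝ) 1 ×ˢ Set.Icc (0 : ℝ) 1))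
    (hg : ContinuousOn (fun p : ℝ × ℝ => g p.1 p.2)
      (Set.Icc (0 : ℝ) 1 ×ˢ Set.Icc (0 : ℝ) 1))
    (hfpos : ∀ s ∈ Set.Icc (0 : ℝ) 1, ∀ t ∈ Set.Icc (0 : ℝ) 1, 0 ≤ f s t)
    (hineq : ∀ s ∈ Set.Icc (0 : ℝ) 1, ∀ t ∈ Set.Icc (0 : ℝ) 1,
      f s t ≤ g s t + M * ∫ ξ in (0 : ℝ)..s, ∫ ζ in (0 : ℝ)..t, f ξ ζ) :
    (∀ s ∈ Set.Icc (0 : ℝ) 1, ∀ t ∈ Set.Icc (0 : ℝ) 1,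
      f s t ≤ g s t + M * ∫ ξ in (0 : ℝ)..s, ∫ ζ in (0 : ℝ)..t,
        g ξ ζ * besselI0 (2 * Real.sqrt (M * (s - ξ) * (t - ζ)))) ∧
    (∀ K : ℝ, 0 ≤ K → (∀ s ∈ Set.Icc (0 : ℝ) 1, ∀ t ∈ Set.Icc (0 : ℝ) 1, g s t = K) →
      ∀ s ∈ Set.Icc (0 : ℝ) 1, ∀ t ∈ Set.Icc (0 : ℝ) 1,
        f s t ≤ K * (1 + M * besselI0 (2 * Real.sqrt M))) := by
  obtain ⟨f', hf'c, hf'eq⟩ := GP.ext_exists hf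
  obtain ⟨g', hg'c, hg'eq⟩ := GP.ext_exists hg
  -- transfer hypothesis to the extensions
  have hineq' : ∀ s ∈ Set.Icc (0:ℝ) 1, ∀ t ∈ Set.Icc (0:ℝ) 1,
      f' s t ≤ g' s t + M * ∫ ξ in (0:ℝ)..s, ∫ ζ in (0:ℝ)..t, f' ξ ζ := by
    intro s hs t ht
    have hii : (∫ ξ in (0:ℝ)..s, ∫ ζ in (0:ℝ)..t, f' ξ ζ)
        = ∫ ξ in (0:ℝ)..s, ∫ ζ in (0:ℝ)..t, f ξ ζ := by
      apply intervalIntegral.integral_congr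
      intro ξ hξ
      rw [Set.uIcc_of_le hs.1] at hξ
      apply intervalIntegral.integral_congr
      intro ζ hζ
      rw [Set.uIcc_of_le ht.1] at hζ
      exact hf'eq ξ ⟨hξ.1, hξ.2.trans hs.2⟩ ζ ⟨hζ.1, hζ.2.trans ht.2⟩
    rw [hf'eq s hs t ht, hg'eq s hs t ht, hii]
    exact hineq s hs t ht
  have hmain := GP.main M hM f' g' hf'c hg'c hineq'
  -- part 1
  have part1 : ∀ s ∈ Set.Icc (0:ℝ) 1, ∀ t ∈ Set.Icc (0:ℝ) 1,
      f s t ≤ g s t + M * ∫ ξ in (0:ℝ)..s, ∫ ζ in (0:ℝ)..t,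
        g ξ ζ * besselI0 (2 * Real.sqrt (M * (s - ξ) * (t - ζ))) := by
    intro s hs t ht
    have h := hmain s hs t ht
    rw [hf'eq s hs t ht, hg'eq s hs t ht] at h
    have hii : (∫ ξ in (0:ℝ)..s, ∫ ζ in (0:ℝ)..t, g' ξ ζ * GP.E (M*(s-ξ)*(t-ζ)))
        = ∫ ξ in (0:ℝ)..s, ∫ ζ in (0:ℝ)..t,
            g ξ ζ * besselI0 (2 * Real.sqrt (M * (s - ξ) * (t - ζ))) := by
      apply intervalIntegral.integral_congr
      intro ξ hξ
      rw [Set.uIcc_of_le hs.1] at hξ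
      apply intervalIntegral.integral_congr
      intro ζ hζ
      rw [Set.uIcc_of_le ht.1] at hζ
      have hx0 : 0 ≤ M*(s-ξ)*(t-ζ) := by
        have h1 : (0:ℝ) ≤ s - ξ := by linarith [hξ.2]
        have h2 : (0:ℝ) ≤ t - ζ := by linarith [hζ.2]
        positivity
      show g' ξ ζ * GP.E (M*(s-ξ)*(t-ζ))
          = g ξ ζ * besselI0 (2 * Real.sqrt (M * (s - ξ) * (t - ζ)))
      rw [GP.besselI0_eq hx0, hg'eq ξ ⟨hξ.1, hξ.2.trans hs.2⟩ ζ ⟨hζ.1, hζ.2.trans ht.2⟩]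
    rw [hii] at h
    exact h
  refine ⟨part1, ?_⟩
  -- part 2
  intro K hK hgK s hs t ht
  have h := part1 s hs t ht
  have hii : (∫ ξ in (0:ℝ)..s, ∫ ζ in (0:ℝ)..t,
      g ξ ζ * besselI0 (2 * Real.sqrt (M * (s - ξ) * (t - ζ))))
      = ∫ ξ in (0:ℝ)..s, ∫ ζ in (0:ℝ)..t, K * GP.E (M*(s-ξ)*(t-ζ)) := by
    apply intervalIntegral.integral_congr
    intro ξ hξ
    rw [Set.uIcc_of_le hs.1] at hξ
    apply intervalIntegral.integral_congr
    intro ζ hζ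
    rw [Set.uIcc_of_le ht.1] at hζ
    have hx0 : 0 ≤ M*(s-ξ)*(t-ζ) := by
      have h1 : (0:ℝ) ≤ s - ξ := by linarith [hξ.2]
      have h2 : (0:ℝ) ≤ t - ζ := by linarith [hζ.2]
      positivity
    show g ξ ζ * besselI0 (2 * Real.sqrt (M * (s - ξ) * (t - ζ)))
        = K * GP.E (M*(s-ξ)*(t-ζ))
    rw [GP.besselI0_eq hx0, hgK ξ ⟨hξ.1, hξ.2.trans hs.2⟩ ζ ⟨hζ.1, hζ.2.trans ht.2⟩]
  rw [hii, hgK s hs t ht] at h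
  simp_rw [intervalIntegral.integral_const_mul] at h
  -- bound the integral
  have hmono := GP.dint_mono (A := fun ξ ζ => K * GP.E (M*(s-ξ)*(t-ζ)))
    (B := fun σ τ => (K * GP.E M) * (σ*τ)^0)
    (continuous_const.mul (GP.continuous_E.comp (by fun_prop))) (by fun_prop)
    hs.1 ht.1 ?_
  · rw [GP.poly_dint] at hmono
    beta_reduce at hmono
    norm_num at hmono
    have hE0 : 0 ≤ GP.E M := GP.E_nonneg hM
    have hbM : besselI0 (2 * Real.sqrt M) = GP.E M := GP.besselI0_eq hM
    rw [hbM]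
    have hle := mul_le_mul_of_nonneg_left hmono hM
    have hst : 0 ≤ s*t := mul_nonneg hs.1 ht.1
    have hst1 : s*t ≤ 1 := by nlinarith [hs.2, ht.2, hs.1, ht.1]
    have hKE : 0 ≤ K * GP.E M := mul_nonneg hK hE0
    have hfin : M * (K * GP.E M * (s*t)) ≤ M * (K * GP.E M) := by
      have h' : K * GP.E M * (s*t) ≤ K * GP.E M := by nlinarith [hKE, hst, hst1]
      exact mul_le_mul_of_nonneg_left h' hM
    nlinarith [h, hle, hfin]
  · intro σ hσ τ hτ
    simp only [pow_zero, mul_one]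
    have hx0 : 0 ≤ M*(s-σ)*(t-τ) := by
      have h1 : (0:ℝ) ≤ s - σ := by linarith [hσ.2]
      have h2 : (0:ℝ) ≤ t - τ := by linarith [hτ.2]
      positivity
    have hxM : M*(s-σ)*(t-τ) ≤ M := by
      have h1 : s - σ ≤ 1 := by linarith [hσ.1, hs.2]
      have h2 : t - τ ≤ 1 := by linarith [hτ.1, ht.2]
      have h3 : (0:ℝ) ≤ s - σ := by linarith [hσ.2]
      have h4 : (0:ℝ) ≤ t - τ := by linarith [hτ.2]
      have ha : 0 ≤ M*(s-σ) := mul_nonneg hM h3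
      calc M*(s-σ)*(t-τ) ≤ M*(s-σ)*1 := mul_le_mul_of_nonneg_left h2 ha
        _ = M*(s-σ) := mul_one _
        _ ≤ M*1 := mul_le_mul_of_nonneg_left h1 hM
        _ = M := mul_one _
    exact mul_le_mul_of_nonneg_left (GP.E_mono hx0 hxM) hK
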